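/- The sum over 321-avoiding permutations π of S_{2n+1} of sign(π)·q^{ldes(π)} equals the sum over 321-avoiding permutations σ of S_n of q^{2·ldes(σ)}, for all n ≥ 0. -/

import Mathlib

open Finset

/-- A permutation is 321-avoiding if it has no decreasing subsequence of length 3. -/
def Avoids321 {n : ℕ} (π : Equiv.Perm (Fin n)) : Prop :=
  ¬ ∃ i j k : Fin n, i < j ∧ j < k ∧ π k < π j ∧ π j < π i

instance {n : ℕ} : DecidablePred (Avoids321 (n := n)) := fun π =>
  decidable_of_iff (¬ ∃ i j k : Fin n, i < j ∧ j < k ∧ π k < π j ∧ π j < π i) Iff.rfl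

/-- The set `T_n` of 321-avoiding permutations of order `n`. -/
def Tset (n : ℕ) : Finset (Equiv.Perm (Fin n)) :=
  Finset.univ.filter (fun π => Avoids321 π)

/-- The value `π(i)` in one-based notation: positions `1,…,n`, values `1,…,n`. -/
def pval {n : ℕ} (π : Equiv.Perm (Fin n)) (i : ℕ) : ℕ :=
  if h : i - 1 < n then (π ⟨i - 1, h⟩ : ℕ) + 1 else 0

/-- The descent set `Des(π) = {1 ≤ i ≤ n-1 : π(i) > π(i+1)}` (one-based). -/
def desSet {n : ℕ} (π : Equiv.Perm (Fin n)) : Finset ℕ :=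
  (Finset.Icc 1 (n - 1)).filter (fun i => pval π (i + 1) < pval π i)

/-- The last descent of `π` (0 for the identity). -/
def ldes {n : ℕ} (π : Equiv.Perm (Fin n)) : ℕ := (desSet π).sup id

/-- `lind(π) = π⁻¹(n)`, the (one-based) position of the letter `n` in `π`. -/
def lind {n : ℕ} (π : Equiv.Perm (Fin n)) : ℕ := pval π.symm n

/-- The inversion number of `π`. -/
def invNum {n : ℕ} (π : Equiv.Perm (Fin n)) : ℕ :=
  (Finset.univ.filter (fun q : Fin n × Fin n => q.1 < q.2 ∧ π q.2 < π q.1)).card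

/-- A ±1 sequence of length `2n` (`true` = +1) is a Dyck path if it has `n` up
steps and every prefix has at least as many up steps as down steps. -/
def IsDyckPred (n : ℕ) (p : Fin (2 * n) → Bool) : Prop :=
  (Finset.univ.filter (fun i => p i = true)).card = n ∧
  ∀ k ≤ 2 * n,
    k ≤ 2 * (Finset.univ.filter (fun i : Fin (2 * n) => (i : ℕ) < k ∧ p i = true)).card

instance (n : ℕ) : DecidablePred (IsDyckPred n) := fun p => by
  unfold IsDyckPred; infer_instance

/-- The set `P_n` of Dyck paths of length `2n`. -/
def DyckPath (n : ℕ) : Type := { p : Fin (2 * n) → Bool // IsDyckPred n p }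

instance (n : ℕ) : Fintype (DyckPath n) := by unfold DyckPath; infer_instance

/-- The `i`-th step of the path, one-based; `true` = +1, `false` = -1. -/
def pstep {n : ℕ} (p : DyckPath n) (i : ℕ) : Bool :=
  if h : i - 1 < 2 * n then p.1 ⟨i - 1, h⟩ else false

/-- `Des(p) = {1 ≤ i ≤ n-1 : p_i = +1, p_{i+1} = -1}`. -/
def pathDes {n : ℕ} (p : DyckPath n) : Finset ℕ :=
  (Finset.Icc 1 (n - 1)).filter (fun i => pstep p i = true ∧ pstep p (i + 1) = false)

/-- `Des(p⁻¹) = {1 ≤ i ≤ n-1 : p_{2n-i} = +1, p_{2n-i+1} = -1}`. -/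
def pathDesInv {n : ℕ} (p : DyckPath n) : Finset ℕ :=
  (Finset.Icc 1 (n - 1)).filter
    (fun i => pstep p (2 * n - i) = true ∧ pstep p (2 * n - i + 1) = false)

/-- `ldes(p) = max{1 ≤ i ≤ n-1 : p_i = +1, p_{i+1} = -1}` (0 if none). -/
def pathLdes {n : ℕ} (p : DyckPath n) : ℕ := (pathDes p).sup id

/-- `lind(p) = max{1 ≤ i ≤ n : p_i = +1, p_{i+1} = -1}` (0 if none). -/
def pathLind {n : ℕ} (p : DyckPath n) : ℕ :=
  ((Finset.Icc 1 n).filter (fun i => pstep p i = true ∧ pstep p (i + 1) = false)).sup id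

/-- `tail(p) = 2n - max{i : p_i = +1, p_{i+1} = -1}`, the number of consecutive
down steps at the end of `p`. -/
def pathTail {n : ℕ} (p : DyckPath n) : ℕ :=
  2 * n -
    ((Finset.Icc 1 (2 * n - 1)).filter
      (fun i => pstep p i = true ∧ pstep p (i + 1) = false)).sup id


namespace SLO
open Equiv Equiv.Perm Fin
variable {m : ℕ}


def ins (k : Fin (m+1)) (σ : Perm (Fin m)) : Perm (Fin (m+1)) :=
  (finSuccEquiv' k).trans ((σ.optionCongr).trans (finSuccEquiv' (Fin.last m)).symm)

@[simp] lemma ins_at (k : Fin (m+1)) (σ : Perm (Fin m)) : ins k σ k = Fin.last m := by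
  simp [ins, finSuccEquiv'_at]

@[simp] lemma ins_succAbove (k : Fin (m+1)) (σ : Perm (Fin m)) (i : Fin m) :
    ins k σ (k.succAbove i) = (σ i).castSucc := by
  simp [ins, finSuccEquiv'_succAbove, Fin.succAbove_last]

def del (π : Perm (Fin (m+1))) : Perm (Fin m) :=
  Equiv.removeNone ((finSuccEquiv' (π.symm (Fin.last m))).symm.trans
    (π.trans (finSuccEquiv' (Fin.last m))))

lemma castSucc_del (π : Perm (Fin (m+1))) (i : Fin m) :
    ((del π) i).castSucc = π ((π.symm (Fin.last m)).succAbove i) := by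
  set p := π.symm (Fin.last m)
  have hne : π (p.succAbove i) ≠ Fin.last m := by
    intro h
    have : p.succAbove i = p := by
      apply π.injective; rw [h]; simp [p]
    exact Fin.succAbove_ne p i this
  obtain ⟨v, hv⟩ := Fin.exists_castSucc_eq.2 hne
  have h2 : ((finSuccEquiv' p).symm.trans (π.trans (finSuccEquiv' (Fin.last m)))) (some i)
      = some v := by
    simp only [Equiv.trans_apply, finSuccEquiv'_symm_some, ← hv]
    exact finSuccEquiv'_below (Fin.castSucc_lt_last v)
  have := Equiv.removeNone_some _ ⟨v, h2⟩
  rw [h2] at this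
  simp only [del, p] at *
  rw [Option.some_inj] at this
  rw [this, hv]

lemma ins_symm_last (k : Fin (m+1)) (σ : Perm (Fin m)) :
    (ins k σ).symm (Fin.last m) = k := by
  rw [← ins_at k σ, Equiv.symm_apply_apply]

lemma del_ins (k : Fin (m+1)) (σ : Perm (Fin m)) : del (ins k σ) = σ := by
  ext i
  have h := castSucc_del (ins k σ) i
  rw [ins_symm_last, ins_succAbove] at h
  exact congrArg Fin.val (Fin.castSucc_injective m h)

lemma ins_del (π : Perm (Fin (m+1))) : ins (π.symm (Fin.last m)) (del π) = π := by
  set p := π.symm (Fin.last m) with hp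
  ext i
  by_cases h : i = p
  · subst h; rw [ins_at]; simp [hp]
  · obtain ⟨j, hj⟩ := Fin.exists_succAbove_eq h
    rw [← hj, ins_succAbove, castSucc_del]

lemma pval_eq {N : ℕ} (σ : Equiv.Perm (Fin N)) (i : ℕ) (h2 : i - 1 < N) :
    pval σ i = (σ ⟨i-1, h2⟩ : ℕ) + 1 := by
  rw [pval, dif_pos]

lemma mem_desSet_iff {N : ℕ} (σ : Equiv.Perm (Fin N)) (i : ℕ) (h1 : 1 ≤ i) (h2 : i ≤ N - 1) :
    i ∈ desSet σ ↔ (σ ⟨i, by omega⟩ : ℕ) < σ ⟨i-1, by omega⟩ := by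
  rw [desSet, Finset.mem_filter]
  rw [pval_eq σ i (by omega), pval_eq σ (i+1) (by omega)]
  simp only [Finset.mem_Icc, add_tsub_cancel_right]
  constructor
  · rintro ⟨-, h⟩; omega
  · intro h; exact ⟨⟨h1, h2⟩, by omega⟩

lemma ldes_le_of_forall {N : ℕ} (σ : Equiv.Perm (Fin N)) (c : ℕ)
    (h : ∀ i, 1 ≤ i → i ≤ N - 1 → i ∈ desSet σ → i ≤ c) : ldes σ ≤ c := by
  apply Finset.sup_le
  intro i hi
  have h1 := (Finset.mem_filter.1 hi).1
  rw [Finset.mem_Icc] at h1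
  exact h i h1.1 h1.2 hi

lemma ldes_le_last {N : ℕ} (σ : Equiv.Perm (Fin N)) : ldes σ ≤ N - 1 :=
  ldes_le_of_forall σ (N-1) (fun i _ h2 _ => h2)

lemma le_ldes_of_mem {N : ℕ} {σ : Equiv.Perm (Fin N)} {i : ℕ} (h : i ∈ desSet σ) :
    i ≤ ldes σ := Finset.le_sup (f := id) h

lemma ldes_le_iff {N : ℕ} (σ : Equiv.Perm (Fin N)) (c : ℕ) :
    ldes σ ≤ c ↔ ∀ a b : Fin N, a < b → c ≤ (a : ℕ) → σ a < σ b := by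
  constructor
  · intro h a b hab hca
    have adj : ∀ a : ℕ, c ≤ a → ∀ (ha : a + 1 < N), σ ⟨a, by omega⟩ < σ ⟨a+1, ha⟩ := by
      intro a hc ha
      rcases lt_trichotomy (σ ⟨a, by omega⟩) (σ ⟨a+1, ha⟩) with h' | h' | h'
      · exact h'
      · exact absurd (σ.injective h') (by simp [Fin.ext_iff])
      · exfalso
        have hm : a + 1 ∈ desSet σ := by
          rw [mem_desSet_iff σ (a+1) (by omega) (by omega)]
          simpa using h'
        have := le_ldes_of_mem hm
        omega
    have key : ∀ (bn : ℕ) (hb : bn < N) (a : Fin N), (a:ℕ) < bn → c ≤ (a:ℕ) →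
        σ a < σ ⟨bn, hb⟩ := by
      intro bn
      induction bn with
      | zero => intro _ _ h1 _; omega
      | succ bn ih =>
        intro hb a h1 h2
        rcases Nat.lt_or_ge (a:ℕ) bn with hlt | hge
        · have hbn : bn < N := by omega
          refine lt_trans (ih hbn a hlt h2) ?_
          exact adj bn (by omega) hb
        · have ha : a = ⟨bn, by omega⟩ := Fin.ext (by show (a:ℕ) = bn; omega)
          rw [ha]; exact adj bn (by omega) hb
    have := key (b:ℕ) b.isLt a hab hca
    simpa using this
  · intro h
    apply ldes_le_of_forall
    intro i h1 h2 hm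
    by_contra hic
    rw [mem_desSet_iff σ i h1 h2] at hm
    have := h ⟨i-1, by omega⟩ ⟨i, by omega⟩ (by simp [Fin.lt_def]; omega) (by simp; omega)
    simp only [Fin.lt_def] at this
    omega
lemma mem_desSet_iff_pval {N : ℕ} (σ : Equiv.Perm (Fin N)) (i : ℕ) (h1 : 1 ≤ i) (h2 : i ≤ N - 1) :
    i ∈ desSet σ ↔ pval σ (i+1) < pval σ i := by
  rw [desSet, Finset.mem_filter, Finset.mem_Icc]
  exact ⟨fun h => h.2, fun h => ⟨⟨h1, h2⟩, h⟩⟩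

variable (k : Fin (m+1)) (σ : Equiv.Perm (Fin m))

lemma pval_ins_lt {i : ℕ} (h1 : 1 ≤ i) (hik : i ≤ (k:ℕ)) : pval (ins k σ) i = pval σ i := by
  have hm : i - 1 < m := by omega
  have hm1 : i - 1 < m + 1 := by omega
  rw [pval_eq _ i hm1, pval_eq _ i hm]
  have hsa : (⟨i-1, hm1⟩ : Fin (m+1)) = k.succAbove ⟨i-1, hm⟩ := by
    rw [Fin.succAbove_of_castSucc_lt]
    · rfl
    · simp [Fin.lt_def]; omega
  rw [hsa, ins_succAbove]
  simp

lemma pval_ins_self : pval (ins k σ) ((k:ℕ)+1) = m + 1 := by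
  have hm1 : (k:ℕ)+1-1 < m + 1 := by omega
  rw [pval_eq _ _ hm1]
  have : (⟨(k:ℕ)+1-1, hm1⟩ : Fin (m+1)) = k := Fin.ext (by simp)
  rw [this, ins_at]
  simp

lemma pval_ins_gt {i : ℕ} (hik : (k:ℕ)+2 ≤ i) (him : i ≤ m+1) :
    pval (ins k σ) i = pval σ (i-1) := by
  have hm1 : i - 1 < m + 1 := by omega
  have hm : i - 1 - 1 < m := by omega
  rw [pval_eq _ i hm1, pval_eq _ (i-1) hm]
  have hsa : (⟨i-1, hm1⟩ : Fin (m+1)) = k.succAbove ⟨i-1-1, hm⟩ := by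
    rw [Fin.succAbove_of_le_castSucc]
    · exact Fin.ext (by simp; omega)
    · simp [Fin.le_def]; omega
  rw [hsa, ins_succAbove]
  simp

lemma ldes_ins_of_lt (hk : (k:ℕ) < m) (h : ldes σ ≤ (k:ℕ)) :
    ldes (ins k σ) = (k:ℕ)+1 := by
  have hmem : (k:ℕ)+1 ∈ desSet (ins k σ) := by
    rw [mem_desSet_iff_pval _ _ (by omega) (by omega)]
    rw [pval_ins_self, pval_ins_gt k σ (by omega) (by omega)]
    rw [pval_eq _ _ (by omega : (k:ℕ)+2-1-1 < m)]
    have := (σ ⟨(k:ℕ)+2-1-1, by omega⟩).isLt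
    omega
  apply le_antisymm
  · apply ldes_le_of_forall
    intro i h1 h2 hi
    by_contra hic
    push_neg at hic
    rw [mem_desSet_iff_pval _ _ h1 h2] at hi
    rw [pval_ins_gt k σ (by omega) (by omega), pval_ins_gt k σ (by omega) (by omega)] at hi
    have : i - 1 ∈ desSet σ := by
      rw [mem_desSet_iff_pval _ _ (by omega) (by omega)]
      have : i - 1 + 1 = i := by omega
      rw [this]
      exact hi
    have := le_ldes_of_mem this
    omega
  · exact le_ldes_of_mem hmem

lemma ldes_ins_of_eq (hk : (k:ℕ) = m) : ldes (ins k σ) = ldes σ := by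
  have : desSet (ins k σ) = desSet σ := by
    ext i
    rcases Nat.lt_or_ge i 1 with h1 | h1
    · constructor <;> intro hi <;>
        [skip; skip] <;>
        · have := (Finset.mem_filter.1 hi).1
          rw [Finset.mem_Icc] at this; omega
    rcases Nat.lt_or_ge i m with h2 | h2
    · -- 1 ≤ i ≤ m - 1
      rw [mem_desSet_iff_pval _ _ h1 (by omega), mem_desSet_iff_pval _ _ h1 (by omega)]
      rw [pval_ins_lt k σ h1 (by omega), pval_ins_lt k σ (by omega) (by omega)]
    · -- i ≥ m : not in either
      constructor <;> intro hi
      · exfalso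
        have hi2 := (Finset.mem_filter.1 hi).1
        rw [Finset.mem_Icc] at hi2
        have him : i = m := by omega
        rw [mem_desSet_iff_pval _ _ h1 (by omega)] at hi
        have h0 : 1 ≤ m := by omega
        rw [pval_ins_lt k σ h1 (by omega)] at hi
        have hik : i + 1 = (k:ℕ) + 1 := by omega
        rw [hik, pval_ins_self] at hi
        rw [pval_eq _ _ (by omega : i - 1 < m)] at hi
        have := (σ ⟨i-1, by omega⟩).isLt
        omega
      · exfalso
        have hi2 := (Finset.mem_filter.1 hi).1
        rw [Finset.mem_Icc] at hi2
        omega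
  rw [ldes, ldes, this]
lemma avoids_ins : Avoids321 (ins k σ) ↔ Avoids321 σ ∧ ldes σ ≤ (k:ℕ) := by
  constructor
  · intro h
    refine ⟨?_, ?_⟩
    · rintro ⟨i, j, l, hij, hjl, h1, h2⟩
      exact h ⟨k.succAbove i, k.succAbove j, k.succAbove l,
        Fin.succAbove_lt_succAbove_iff.2 hij, Fin.succAbove_lt_succAbove_iff.2 hjl,
        by rw [ins_succAbove, ins_succAbove]; exact Fin.castSucc_lt_castSucc_iff.2 h1,
        by rw [ins_succAbove, ins_succAbove]; exact Fin.castSucc_lt_castSucc_iff.2 h2⟩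
    · rw [ldes_le_iff]
      intro a b hab hka
      by_contra hv
      push_neg at hv
      have hne : σ b ≠ σ a := fun e => (ne_of_lt hab) ((σ.injective e).symm)
      have hv' : σ b < σ a := lt_of_le_of_ne hv hne
      apply h
      refine ⟨k, k.succAbove a, k.succAbove b, ?_,
        Fin.succAbove_lt_succAbove_iff.2 hab, ?_, ?_⟩
      · rw [Fin.lt_succAbove_iff_le_castSucc]
        exact hka
      · rw [ins_succAbove, ins_succAbove]
        exact Fin.castSucc_lt_castSucc_iff.2 hv'
      · rw [ins_succAbove, ins_at]
        exact Fin.castSucc_lt_last _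
  · rintro ⟨hA, hL⟩ ⟨i, j, l, hij, hjl, h1, h2⟩
    have hjk : j ≠ k := by
      intro e; subst e
      rw [ins_at] at h2
      exact absurd h2 (not_lt.2 (Fin.le_last _))
    have hlk : l ≠ k := by
      intro e; subst e
      rw [ins_at] at h1
      exact absurd h1 (not_lt.2 (Fin.le_last _))
    obtain ⟨j', hj⟩ := Fin.exists_succAbove_eq hjk
    obtain ⟨l', hl⟩ := Fin.exists_succAbove_eq hlk
    have hj'l' : j' < l' := by
      rw [← Fin.succAbove_lt_succAbove_iff (p := k), hj, hl]
      exact hjl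
    by_cases hik : i = k
    · have hkj' : k ≤ j'.castSucc := by
        rw [← Fin.lt_succAbove_iff_le_castSucc, hj]
        exact hik ▸ hij
      have hmono : σ j' < σ l' :=
        (ldes_le_iff σ (k:ℕ)).1 hL j' l' hj'l' hkj'
      rw [← hj, ← hl, ins_succAbove, ins_succAbove] at h1
      exact absurd (Fin.castSucc_lt_castSucc_iff.1 h1) (lt_asymm hmono)
    · obtain ⟨i', hi⟩ := Fin.exists_succAbove_eq hik
      apply hA
      refine ⟨i', j', l', ?_, hj'l', ?_, ?_⟩
      · rw [← Fin.succAbove_lt_succAbove_iff (p := k), hi, hj]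
        exact hij
      · rw [← hj, ← hl, ins_succAbove, ins_succAbove] at h1
        exact Fin.castSucc_lt_castSucc_iff.1 h1
      · rw [← hi, ← hj, ins_succAbove, ins_succAbove] at h2
        exact Fin.castSucc_lt_castSucc_iff.1 h2
lemma invNum_ins : invNum (ins k σ) = invNum σ + (m - (k:ℕ)) := by
  classical
  set π := ins k σ with hπ
  set S : Finset (Fin (m+1) × Fin (m+1)) :=
    Finset.univ.filter (fun q : Fin (m+1) × Fin (m+1) => q.1 < q.2 ∧ π q.2 < π q.1) with hS
  have hA : (S.filter (fun q => q.1 = k)).card = m - (k:ℕ) := by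
    have hIoi : (Finset.Ioi k).card = m - (k:ℕ) := by rw [Fin.card_Ioi]; omega
    rw [← hIoi]
    symm
    apply Finset.card_nbij (i := fun b => ((k : Fin (m+1)), b))
    · intro b hb
      rw [Finset.mem_coe, Finset.mem_Ioi] at hb
      simp only [S, Finset.mem_coe, Finset.mem_filter, Finset.mem_univ, true_and]
      refine ⟨⟨hb, ?_⟩, trivial⟩
      rw [ins_at]
      apply Fin.lt_last_iff_ne_last.2
      intro e
      have : b = k := π.injective (by rw [e, ins_at])
      exact absurd this (ne_of_gt hb)
    · intro a _ b _ h
      exact congrArg Prod.snd h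
    · rintro ⟨a, b⟩ hab
      simp only [S, Finset.coe_filter, Finset.mem_filter, Finset.mem_univ, true_and, Set.mem_setOf_eq] at hab
      obtain ⟨⟨hlt, -⟩, hak⟩ := hab
      refine ⟨b, ?_, ?_⟩
      · rw [Finset.coe_Ioi, Set.mem_Ioi]
        rw [hak] at hlt
        exact hlt
      · rw [hak]
  have hB : (S.filter (fun q => ¬ q.1 = k)).card = invNum σ := by
    rw [invNum]
    symm
    apply Finset.card_nbij (i := fun q : Fin m × Fin m => (k.succAbove q.1, k.succAbove q.2))
    · intro q hq
      rw [Finset.mem_coe, Finset.mem_filter] at hq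
      obtain ⟨-, h1, h2⟩ := hq
      simp only [S, Finset.mem_coe, Finset.mem_filter, Finset.mem_univ, true_and]
      refine ⟨⟨Fin.succAbove_lt_succAbove_iff.2 h1, ?_⟩, Fin.succAbove_ne k q.1⟩
      rw [hπ, ins_succAbove, ins_succAbove]
      exact Fin.castSucc_lt_castSucc_iff.2 h2
    · intro q1 _ q2 _ h
      have h1 := congrArg Prod.fst h
      have h2 := congrArg Prod.snd h
      simp only at h1 h2
      exact Prod.ext (Fin.succAbove_right_injective h1) (Fin.succAbove_right_injective h2)
    · rintro ⟨a, b⟩ hab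
      simp only [S, Finset.coe_filter, Finset.mem_filter, Finset.mem_univ, true_and, Set.mem_setOf_eq] at hab
      obtain ⟨⟨hlt, hval⟩, hak⟩ := hab
      have hbk : b ≠ k := by
        intro e
        rw [e, hπ, ins_at] at hval
        exact absurd hval (not_lt.2 (Fin.le_last _))
      obtain ⟨a', ha⟩ := Fin.exists_succAbove_eq hak
      obtain ⟨b', hb⟩ := Fin.exists_succAbove_eq hbk
      refine ⟨(a', b'), ?_, by simp only []; rw [ha, hb]⟩
      simp only [Finset.coe_filter, Set.mem_setOf_eq, Finset.mem_univ, true_and]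
      constructor
      · rw [← Fin.succAbove_lt_succAbove_iff (p := k), ha, hb]
        exact hlt
      · rw [← ha, ← hb, hπ, ins_succAbove, ins_succAbove] at hval
        exact Fin.castSucc_lt_castSucc_iff.1 hval
  rw [invNum, ← Finset.card_filter_add_card_filter_not
    (p := fun q : Fin (m+1) × Fin (m+1) => q.1 = k), hA, hB]
  omega
lemma master (F : Equiv.Perm (Fin (m+1)) → ℤ) :
    ∑ π ∈ Tset (m+1), F π =
      ∑ k : Fin (m+1), ∑ σ ∈ (Tset m).filter (fun σ => ldes σ ≤ (k:ℕ)), F (ins k σ) := by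
  classical
  rw [← Finset.sum_sigma (Finset.univ : Finset (Fin (m+1)))
    (fun k => (Tset m).filter (fun σ => ldes σ ≤ (k:ℕ))) (fun x => F (ins x.1 x.2))]
  apply Finset.sum_nbij' (i := fun π => (⟨π.symm (Fin.last m), del π⟩ : Σ _ : Fin (m+1), Equiv.Perm (Fin m)))
    (j := fun x => ins x.1 x.2)
  · intro π hπ
    rw [Tset, Finset.mem_filter] at hπ
    have hav : Avoids321 (ins (π.symm (Fin.last m)) (del π)) := by
      rw [ins_del]; exact hπ.2
    rw [avoids_ins] at hav
    simp only [Finset.mem_sigma, Finset.mem_univ, true_and, Finset.mem_filter, Tset]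
    exact ⟨hav.1, hav.2⟩
  · rintro ⟨k, σ⟩ hx
    simp only [Finset.mem_sigma, Finset.mem_univ, true_and, Finset.mem_filter, Tset] at hx
    rw [Tset, Finset.mem_filter]
    exact ⟨Finset.mem_univ _, (avoids_ins k σ).2 hx⟩
  · intro π _
    exact ins_del π
  · rintro ⟨k, σ⟩ _
    have h1 : (ins k σ).symm (Fin.last m) = k := ins_symm_last k σ
    have h2 : del (ins k σ) = σ := del_ins k σ
    exact Sigma.ext h1 (heq_of_eq h2)
  · intro π _
    rw [ins_del]
lemma rec_gen (w : ℕ → ℤ) (hw : ∀ a b, w (a+b) = w a * w b) (ℓ : ℕ) :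
    ∑ π ∈ (Tset (m+1)).filter (fun π => ldes π = ℓ), w (invNum π) =
      (∑ σ ∈ (Tset m).filter (fun σ => ldes σ = ℓ), w (invNum σ)) +
      (if 1 ≤ ℓ ∧ ℓ ≤ m then
        w (m+1-ℓ) * ∑ σ ∈ (Tset m).filter (fun σ => ldes σ ≤ ℓ-1), w (invNum σ)
      else 0) := by
  classical
  rw [Finset.sum_filter]
  rw [master (fun π => if ldes π = ℓ then w (invNum π) else 0)]
  rw [Fin.sum_univ_castSucc]
  have hlast : ∑ σ ∈ (Tset m).filter
        (fun σ => ldes σ ≤ (((Fin.last m) : Fin (m+1)):ℕ)),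
        (if ldes (ins (Fin.last m) σ) = ℓ then w (invNum (ins (Fin.last m) σ)) else 0)
      = ∑ σ ∈ (Tset m).filter (fun σ => ldes σ = ℓ), w (invNum σ) := by
    have hfil : (Tset m).filter (fun σ => ldes σ ≤ (((Fin.last m) : Fin (m+1)):ℕ)) = Tset m := by
      apply Finset.filter_true_of_mem
      intro σ _
      have := ldes_le_last σ
      simp only [Fin.val_last]
      omega
    rw [hfil]
    have hstep2 : ∀ σ ∈ Tset m,
        (if ldes (ins (Fin.last m) σ) = ℓ then w (invNum (ins (Fin.last m) σ)) else 0)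
        = (if ldes σ = ℓ then w (invNum σ) else 0) := by
      intro σ _
      rw [ldes_ins_of_eq _ _ (by simp), invNum_ins]
      simp only [Fin.val_last, Nat.sub_self, add_zero]
    rw [Finset.sum_congr rfl hstep2, ← Finset.sum_filter]
  have hcast : ∀ j : Fin m,
      (∑ σ ∈ (Tset m).filter (fun σ => ldes σ ≤ ((Fin.castSucc j : Fin (m+1)):ℕ)),
        (if ldes (ins (Fin.castSucc j) σ) = ℓ then w (invNum (ins (Fin.castSucc j) σ)) else 0))
      = (if (j:ℕ)+1 = ℓ then
          w (m - (j:ℕ)) * ∑ σ ∈ (Tset m).filter (fun σ => ldes σ ≤ (j:ℕ)), w (invNum σ)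
        else 0) := by
    intro j
    have hstep : ∀ σ ∈ (Tset m).filter (fun σ => ldes σ ≤ ((Fin.castSucc j : Fin (m+1)):ℕ)),
        (if ldes (ins (Fin.castSucc j) σ) = ℓ then w (invNum (ins (Fin.castSucc j) σ)) else 0)
        = (if (j:ℕ)+1 = ℓ then w (m - (j:ℕ)) * w (invNum σ) else 0) := by
      intro σ hσ
      rw [Finset.mem_filter] at hσ
      have hld : ldes σ ≤ ((Fin.castSucc j : Fin (m+1)):ℕ) := hσ.2
      rw [ldes_ins_of_lt _ _ (by simp) (by simpa using hld), invNum_ins]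
      simp only [Fin.coe_castSucc]
      by_cases hc : (j:ℕ)+1 = ℓ
      · rw [if_pos hc, if_pos hc, hw, mul_comm]
      · rw [if_neg hc, if_neg hc]
    rw [Finset.sum_congr rfl hstep]
    have hfc : (Tset m).filter (fun σ => ldes σ ≤ ((Fin.castSucc j : Fin (m+1)):ℕ))
        = (Tset m).filter (fun σ => ldes σ ≤ (j:ℕ)) := by
      simp only [Fin.coe_castSucc]
    rw [hfc]
    by_cases hc : (j:ℕ)+1 = ℓ
    · simp only [if_pos hc, Finset.mul_sum]
    · simp only [if_neg hc, Finset.sum_const_zero]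
  rw [Finset.sum_congr rfl (fun j _ => hcast j), hlast]
  rw [add_comm]
  congr 1
  by_cases hℓ : 1 ≤ ℓ ∧ ℓ ≤ m
  · rw [Finset.sum_eq_single (⟨ℓ-1, by omega⟩ : Fin m)]
    · have hc : ((⟨ℓ-1, by omega⟩ : Fin m) : ℕ) + 1 = ℓ := by simp; omega
      rw [if_pos hc, if_pos hℓ]
      have h1 : m - ((⟨ℓ-1, by omega⟩ : Fin m) : ℕ) = m + 1 - ℓ := by simp; omega
      have h2 : ((⟨ℓ-1, by omega⟩ : Fin m) : ℕ) = ℓ - 1 := rfl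
      rw [h1, h2]
    · intro b _ hb
      rw [if_neg]
      intro hc
      apply hb
      apply Fin.ext
      simp
      omega
    · intro h
      exact absurd (Finset.mem_univ _) h
  · rw [if_neg hℓ]
    apply Finset.sum_eq_zero
    intro j _
    rw [if_neg]
    intro hc
    have := j.isLt
    omega

def A (M ℓ : ℕ) : ℤ := ∑ π ∈ (Tset M).filter (fun π => ldes π = ℓ), (-1 : ℤ)^(invNum π)
def SA (M c : ℕ) : ℤ := ∑ π ∈ (Tset M).filter (fun π => ldes π ≤ c), (-1 : ℤ)^(invNum π)
def Nc (M ℓ : ℕ) : ℤ := ∑ _π ∈ (Tset M).filter (fun π => ldes π = ℓ), (1 : ℤ)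
def SN (M c : ℕ) : ℤ := ∑ _π ∈ (Tset M).filter (fun π => ldes π ≤ c), (1 : ℤ)

lemma recA (M ℓ : ℕ) : A (M+1) ℓ = A M ℓ +
    (if 1 ≤ ℓ ∧ ℓ ≤ M then (-1 : ℤ)^(M+1-ℓ) * SA M (ℓ-1) else 0) := by
  have := rec_gen (m := M) (fun v => (-1 : ℤ)^v) (fun a b => by simp [pow_add]) ℓ
  exact this

lemma recN (M ℓ : ℕ) : Nc (M+1) ℓ = Nc M ℓ +
    (if 1 ≤ ℓ ∧ ℓ ≤ M then SN M (ℓ-1) else 0) := by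
  have := rec_gen (m := M) (fun _ => (1 : ℤ)) (fun a b => by simp) ℓ
  simpa [Nc, SN] using this

lemma filter_ldes_eq_empty {M ℓ : ℕ} (h : M - 1 < ℓ) :
    (Tset M).filter (fun π : Equiv.Perm (Fin M) => ldes π = ℓ) = ∅ := by
  apply Finset.filter_false_of_mem
  intro π _
  have := ldes_le_last π
  omega

lemma A_vanish {M ℓ : ℕ} (h : M - 1 < ℓ) : A M ℓ = 0 := by
  rw [A, filter_ldes_eq_empty h, Finset.sum_empty]

lemma Nc_vanish {M ℓ : ℕ} (h : M - 1 < ℓ) : Nc M ℓ = 0 := by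
  rw [Nc, filter_ldes_eq_empty h, Finset.sum_empty]

lemma sum_ldes_le_succ {M c : ℕ} (f : Equiv.Perm (Fin M) → ℤ) :
    ∑ π ∈ (Tset M).filter (fun π => ldes π ≤ c + 1), f π =
      (∑ π ∈ (Tset M).filter (fun π => ldes π ≤ c), f π) +
      ∑ π ∈ (Tset M).filter (fun π => ldes π = c + 1), f π := by
  classical
  rw [Finset.sum_filter, Finset.sum_filter, Finset.sum_filter, ← Finset.sum_add_distrib]
  apply Finset.sum_congr rfl
  intro π _
  by_cases h1 : ldes π ≤ c
  · rw [if_pos (by omega), if_pos h1, if_neg (by omega), add_zero]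
  · by_cases h2 : ldes π = c + 1
    · rw [if_pos (by omega), if_neg h1, if_pos h2, zero_add]
    · rw [if_neg (by omega), if_neg h1, if_neg h2, add_zero]

lemma SA_succ (M c : ℕ) : SA M (c+1) = SA M c + A M (c+1) := sum_ldes_le_succ _
lemma SN_succ (M c : ℕ) : SN M (c+1) = SN M c + Nc M (c+1) := sum_ldes_le_succ _

lemma filter_ldes_le_zero (M : ℕ) :
    (Tset M).filter (fun π : Equiv.Perm (Fin M) => ldes π ≤ 0) =
    (Tset M).filter (fun π => ldes π = 0) := by
  apply Finset.filter_congr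
  intro π _
  simp [Nat.le_zero]

lemma SA_zero (M : ℕ) : SA M 0 = A M 0 := by rw [SA, A, filter_ldes_le_zero]
lemma SN_zero (M : ℕ) : SN M 0 = Nc M 0 := by rw [SN, Nc, filter_ldes_le_zero]

lemma Tset_small {M : ℕ} (hM : M ≤ 1) : Tset M = {1} := by
  have hfin : ∀ i j : Fin M, i = j := by
    intro i j
    have h1 := i.isLt
    have h2 := j.isLt
    exact Fin.ext (by omega)
  have hss : ∀ π : Equiv.Perm (Fin M), π = 1 :=
    fun π => Equiv.ext fun i => hfin _ _
  ext π
  simp only [Tset, Finset.mem_filter, Finset.mem_univ, true_and, Finset.mem_singleton]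
  constructor
  · intro _; exact hss π
  · intro _
    rintro ⟨i, j, l, hij, -, -⟩
    rw [hfin i j] at hij
    exact lt_irrefl _ hij
lemma invNum_one (M : ℕ) : invNum (1 : Equiv.Perm (Fin M)) = 0 := by
  rw [invNum]
  convert Finset.card_empty
  apply Finset.filter_false_of_mem
  rintro ⟨a, b⟩ _
  rintro ⟨h1, h2⟩
  simp only [Equiv.Perm.one_apply] at h2
  exact absurd h1 (not_lt.2 (le_of_lt h2))

lemma ldes_one_small {M : ℕ} (hM : M ≤ 1) : ldes (1 : Equiv.Perm (Fin M)) = 0 := by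
  have := ldes_le_last (1 : Equiv.Perm (Fin M))
  omega

lemma A_small {M : ℕ} (hM : M ≤ 1) (ℓ : ℕ) : A M ℓ = if ℓ = 0 then 1 else 0 := by
  rw [A, Tset_small hM, Finset.filter_singleton]
  by_cases h : ℓ = 0
  · rw [if_pos (by rw [ldes_one_small hM, h]), if_pos h, Finset.sum_singleton,
      invNum_one, pow_zero]
  · rw [if_neg (by rw [ldes_one_small hM]; omega), if_neg h, Finset.sum_empty]

lemma Nc_small {M : ℕ} (hM : M ≤ 1) (ℓ : ℕ) : Nc M ℓ = if ℓ = 0 then 1 else 0 := by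
  rw [Nc, Tset_small hM, Finset.filter_singleton]
  by_cases h : ℓ = 0
  · rw [if_pos (by rw [ldes_one_small hM, h]), if_pos h, Finset.sum_singleton]
  · rw [if_neg (by rw [ldes_one_small hM]; omega), if_neg h, Finset.sum_empty]

def Podd (n : ℕ) : Prop := ∀ ℓ, A (2*n+1) (2*ℓ) = Nc n ℓ ∧ A (2*n+1) (2*ℓ+1) = 0
def Peven (n : ℕ) : Prop := ∀ ℓ, A (2*n+2) (2*ℓ) = Nc (n+1) ℓ ∧ A (2*n+2) (2*ℓ+1) = -Nc (n+1) ℓ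

lemma podd_zero : Podd 0 := by
  intro ℓ
  rw [A_small (by norm_num), A_small (by norm_num), Nc_small (by norm_num)]
  constructor
  · by_cases h : ℓ = 0
    · rw [if_pos (by omega), if_pos h]
    · rw [if_neg (by omega), if_neg h]
  · rw [if_neg (by omega)]

lemma sa_odd {n : ℕ} (hP : Podd n) :
    ∀ j, SA (2*n+1) (2*j) = SN n j ∧ SA (2*n+1) (2*j+1) = SN n j := by
  intro j
  induction j with
  | zero =>
    have h0 : SA (2*n+1) 0 = SN n 0 := by
      rw [SA_zero, SN_zero]
      have := (hP 0).1
      simpa using this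
    refine ⟨by simpa using h0, ?_⟩
    have h1 : SA (2*n+1) (2*0+1) = SA (2*n+1) 0 + A (2*n+1) 1 := by
      simpa using SA_succ (2*n+1) 0
    rw [h1, h0]
    have := (hP 0).2
    simp only [mul_zero, zero_add] at this
    rw [this, add_zero]
  | succ j ih =>
    have e1 : 2*(j+1) = (2*j+1) + 1 := by omega
    have e2 : 2*(j+1)+1 = (2*(j+1)) + 1 := by omega
    constructor
    · rw [e1, SA_succ, ih.2]
      have : (2*j+1)+1 = 2*(j+1) := by omega
      rw [this, (hP (j+1)).1, SN_succ]
    · rw [e2, SA_succ, e1, SA_succ, ih.2]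
      have e3 : (2*j+1)+1 = 2*(j+1) := by omega
      rw [e3, (hP (j+1)).1, ← SN_succ]
      have e4 : (2*(j+1)) + 1 = 2*(j+1)+1 := rfl
      rw [e4, (hP (j+1)).2, add_zero]

lemma nc_succ_eq_sn {n ℓ : ℕ} (hℓ : ℓ ≤ n) : Nc (n+1) ℓ = SN n ℓ := by
  rcases Nat.eq_zero_or_pos ℓ with h0 | h0
  · subst h0
    rw [recN, if_neg (by omega), add_zero, SN_zero]
  · rw [recN, if_pos ⟨h0, hℓ⟩]
    have : ℓ - 1 + 1 = ℓ := by omega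
    rw [← this, SN_succ, this]
    ring

lemma step_even {n : ℕ} (hP : Podd n) : Peven n := by
  intro ℓ
  constructor
  · rcases Nat.eq_zero_or_pos ℓ with h0 | h0
    · subst h0
      simp only [mul_zero]
      rw [show 2*n+2 = (2*n+1)+1 from rfl, recA, if_neg (by omega), add_zero]
      have := (hP 0).1
      simp only [mul_zero] at this
      rw [this, recN, if_neg (by omega), add_zero]
    · rcases le_or_gt ℓ n with h1 | h1
      · rw [show 2*n+2 = (2*n+1)+1 from rfl, recA, if_pos (by omega)]
        have hpow : ((-1 : ℤ))^(2*n+1+1-2*ℓ) = 1 :=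
          Even.neg_one_pow ⟨n+1-ℓ, by omega⟩
        rw [hpow, one_mul]
        have he : 2*ℓ - 1 = 2*(ℓ-1)+1 := by omega
        rw [he, (sa_odd hP (ℓ-1)).2, (hP ℓ).1]
        rw [recN, if_pos ⟨h0, h1⟩]
      · rw [A_vanish (by omega), Nc_vanish (by omega)]
  · rcases le_or_gt ℓ n with h1 | h1
    · rw [show 2*n+2 = (2*n+1)+1 from rfl, recA, if_pos (by omega)]
      have hpow : ((-1 : ℤ))^(2*n+1+1-(2*ℓ+1)) = -1 :=
        Odd.neg_one_pow ⟨n-ℓ, by omega⟩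
      rw [hpow, (hP ℓ).2, zero_add]
      have he : 2*ℓ+1-1 = 2*ℓ := by omega
      rw [he, (sa_odd hP ℓ).1, nc_succ_eq_sn h1]
      ring
    · rw [A_vanish (by omega), Nc_vanish (by omega), neg_zero]

lemma sa_even {n : ℕ} (hE : Peven n) :
    ∀ j, SA (2*n+2) (2*j) = Nc (n+1) j ∧ SA (2*n+2) (2*j+1) = 0 := by
  intro j
  induction j with
  | zero =>
    have h0 : SA (2*n+2) 0 = Nc (n+1) 0 := by
      rw [SA_zero]
      have := (hE 0).1
      simpa using this
    refine ⟨by simpa using h0, ?_⟩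
    have h1 : SA (2*n+2) (2*0+1) = SA (2*n+2) 0 + A (2*n+2) 1 := by
      simpa using SA_succ (2*n+2) 0
    rw [h1, h0]
    have := (hE 0).2
    simp only [mul_zero, zero_add] at this
    rw [this]
    ring
  | succ j ih =>
    have e1 : 2*(j+1) = (2*j+1) + 1 := by omega
    constructor
    · rw [e1, SA_succ, ih.2, zero_add]
      have : (2*j+1)+1 = 2*(j+1) := by omega
      rw [this, (hE (j+1)).1]
    · rw [show 2*(j+1)+1 = (2*(j+1)) + 1 from rfl, SA_succ, e1, SA_succ, ih.2, zero_add]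
      have e3 : (2*j+1)+1 = 2*(j+1) := by omega
      rw [e3, (hE (j+1)).1]
      have e4 : (2*(j+1)) + 1 = 2*(j+1)+1 := rfl
      rw [e4, (hE (j+1)).2]
      ring

lemma step_odd {n : ℕ} (hE : Peven n) : Podd (n+1) := by
  intro ℓ
  constructor
  · rcases Nat.eq_zero_or_pos ℓ with h0 | h0
    · subst h0
      simp only [mul_zero]
      rw [show 2*(n+1)+1 = (2*n+2)+1 from by ring, recA, if_neg (by omega), add_zero]
      have := (hE 0).1
      simpa using this
    · rcases le_or_gt ℓ (n+1) with h1 | h1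
      · rw [show 2*(n+1)+1 = (2*n+2)+1 from by ring, recA, if_pos (by omega)]
        have hpow : ((-1 : ℤ))^(2*n+2+1-2*ℓ) = -1 :=
          Odd.neg_one_pow ⟨n+1-ℓ, by omega⟩
        rw [hpow]
        have he : 2*ℓ - 1 = 2*(ℓ-1)+1 := by omega
        rw [he, (sa_even hE (ℓ-1)).2, (hE ℓ).1]
        ring
      · rw [A_vanish (by omega), Nc_vanish (by omega)]
  · rcases le_or_gt ℓ n with h1 | h1
    · rw [show 2*(n+1)+1 = (2*n+2)+1 from by ring, recA, if_pos (by omega)]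
      have hpow : ((-1 : ℤ))^(2*n+2+1-(2*ℓ+1)) = 1 :=
        Even.neg_one_pow ⟨n+1-ℓ, by omega⟩
      rw [hpow, one_mul, (hE ℓ).2]
      have he : 2*ℓ+1-1 = 2*ℓ := by omega
      rw [he, (sa_even hE ℓ).1]
      ring
    · rw [A_vanish (by omega)]

lemma podd_all (n : ℕ) : Podd n := by
  induction n with
  | zero => exact podd_zero
  | succ n ih => exact step_odd (step_even ih)

lemma sum_range_even_odd (f : ℕ → ℤ) (N : ℕ) :
    ∑ ℓ ∈ Finset.range (2*N), f ℓ = ∑ j ∈ Finset.range N, (f (2*j) + f (2*j+1)) := by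
  induction N with
  | zero => simp
  | succ N ih =>
    rw [Finset.sum_range_succ, ← ih, show 2*(N+1) = (2*N+1)+1 from by ring,
      Finset.sum_range_succ, Finset.sum_range_succ]
    ring

end SLO

theorem signed_ldes_odd (n : ℕ) (q : ℤ) :
    ∑ π ∈ Tset (2 * n + 1), (-1 : ℤ) ^ invNum π * q ^ ldes π =
      ∑ σ ∈ Tset n, q ^ (2 * ldes σ) := by
  classical
  have hL : ∑ π ∈ Tset (2*n+1), (-1:ℤ)^invNum π * q ^ ldes π
      = ∑ ℓ ∈ Finset.range (2*(n+1)), SLO.A (2*n+1) ℓ * q^ℓ := by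
    rw [← Finset.sum_fiberwise_of_maps_to
      (g := fun π : Equiv.Perm (Fin (2*n+1)) => ldes π) (t := Finset.range (2*(n+1)))
      (fun π _ => by
        rw [Finset.mem_range]
        show ldes π < 2*(n+1)
        have := SLO.ldes_le_last π
        omega)
      (fun π => (-1:ℤ)^invNum π * q ^ ldes π)]
    apply Finset.sum_congr rfl
    intro ℓ _
    rw [SLO.A, Finset.sum_mul]
    apply Finset.sum_congr rfl
    intro π hπ
    rw [Finset.mem_filter] at hπ
    rw [hπ.2]
  have hR : ∑ σ ∈ Tset n, q ^ (2 * ldes σ)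
      = ∑ j ∈ Finset.range (n+1), SLO.Nc n j * q^(2*j) := by
    rw [← Finset.sum_fiberwise_of_maps_to
      (g := fun σ : Equiv.Perm (Fin n) => ldes σ) (t := Finset.range (n+1))
      (fun σ _ => by
        rw [Finset.mem_range]
        show ldes σ < n+1
        have := SLO.ldes_le_last σ
        omega)
      (fun σ => q ^ (2 * ldes σ))]
    apply Finset.sum_congr rfl
    intro j _
    rw [SLO.Nc, Finset.sum_mul]
    apply Finset.sum_congr rfl
    intro σ hσ
    rw [Finset.mem_filter] at hσ
    rw [hσ.2, one_mul]
  rw [hL, hR, SLO.sum_range_even_odd]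
  apply Finset.sum_congr rfl
  intro j _
  rw [(SLO.podd_all n j).1, (SLO.podd_all n j).2, zero_mul, add_zero]
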